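/- Let K: ℝ^d → ℝ be λ-convex (λ > 0) and C² with ‖∇²K‖ ≤ C_K everywhere. Let ρ₁⁰, ρ₂⁰, ρ₁¹, ρ₂¹ be absolutely continuous probability measures with finite second moments such that m₁[ρ₁⁰] + m₁[ρ₂⁰] = 0 = m₁[ρ₁¹] + m₁[ρ₂¹], and let T₁, T₂ be the optimal transport maps pushing ρ_j⁰ to ρ_j¹. Along the interpolation ρ_j^s = ((1−s)id + sT_j) # ρ_j⁰, the interaction energy satisfies ∫ ρ₁^s K∗ρ₂^s dx ≤ (1−s)∫ ρ₁⁰ K∗ρ₂⁰ dx + s ∫ ρ₁¹ K∗ρ₂¹ dx − (λ/2)s(1−s)[W(ρ₁⁰,ρ₁¹)² + W(ρ₂⁰,ρ₂¹)²] for all s ∈ [0,1]. -/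

import Mathlib

open MeasureTheory
open scoped RealInnerProductSpace

section Aux
variable {E : Type*} [NormedAddCommGroup E] [InnerProductSpace ℝ E]

lemma stmt11_norm_combo_sq (a b : E) (s : ℝ) :
    ‖(1 - s) • a + s • b‖ ^ 2
      = (1 - s) * ‖a‖ ^ 2 + s * ‖b‖ ^ 2 - s * (1 - s) * ‖a - b‖ ^ 2 := by
  have h1 := norm_add_sq_real ((1 - s) • a) (s • b)
  have h2 := norm_sub_sq_real a b
  simp only [norm_smul, real_inner_smul_left, real_inner_smul_right, Real.norm_eq_abs] at h1
  have ha : (|1 - s| * ‖a‖) ^ 2 = (1 - s) ^ 2 * ‖a‖ ^ 2 := by rw [mul_pow, sq_abs]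
  have hb : (|s| * ‖b‖) ^ 2 = s ^ 2 * ‖b‖ ^ 2 := by rw [mul_pow, sq_abs]
  nlinarith [h1, h2, ha, hb]

lemma stmt11_pointwise_conv {K : E → ℝ} {lam : ℝ}
    (hKconv : ConvexOn ℝ Set.univ (fun z => K z - lam / 2 * ‖z‖ ^ 2))
    {s : ℝ} (hs0 : 0 ≤ s) (hs1 : s ≤ 1) (a b : E) :
    K ((1 - s) • a + s • b)
      ≤ (1 - s) * K a + s * K b - lam / 2 * s * (1 - s) * ‖a - b‖ ^ 2 := by
  have h := hKconv.2 (Set.mem_univ a) (Set.mem_univ b)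
    (by linarith : (0:ℝ) ≤ 1 - s) hs0 (by ring)
  simp only [smul_eq_mul] at h
  rw [stmt11_norm_combo_sq a b s] at h
  ring_nf at h ⊢
  linarith

lemma stmt11_four_sq {x y u v : E} {c₁ c₂ : ℝ} (h₁ : |c₁| ≤ 1) (h₂ : |c₂| ≤ 1) :
    ‖c₁ • (x - y) + c₂ • (u - v)‖ ^ 2
      ≤ 4 * (‖x‖ ^ 2 + ‖y‖ ^ 2 + ‖u‖ ^ 2 + ‖v‖ ^ 2) := by
  have hn : ‖c₁ • (x - y) + c₂ • (u - v)‖ ≤ ‖x‖ + ‖y‖ + ‖u‖ + ‖v‖ := by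
    have t1 := norm_add_le (c₁ • (x - y)) (c₂ • (u - v))
    have t2 : ‖c₁ • (x - y)‖ = |c₁| * ‖x - y‖ := by rw [norm_smul, Real.norm_eq_abs]
    have t3 : ‖c₂ • (u - v)‖ = |c₂| * ‖u - v‖ := by rw [norm_smul, Real.norm_eq_abs]
    have t4 := norm_sub_le x y
    have t5 := norm_sub_le u v
    have t6 := norm_nonneg (x - y)
    have t7 := norm_nonneg (u - v)
    have t8 := abs_nonneg c₁
    have t9 := abs_nonneg c₂
    nlinarith
  have h0 := norm_nonneg (c₁ • (x - y) + c₂ • (u - v))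
  nlinarith [sq_nonneg (‖x‖ - ‖y‖), sq_nonneg (‖x‖ - ‖u‖), sq_nonneg (‖x‖ - ‖v‖),
    sq_nonneg (‖y‖ - ‖u‖), sq_nonneg (‖y‖ - ‖v‖), sq_nonneg (‖u‖ - ‖v‖), hn, h0]

end Aux

lemma stmt11_quad_growth {E : Type*} [NormedAddCommGroup E] [NormedSpace ℝ E]
    {K : E → ℝ} {CK : ℝ} (hK2 : ContDiff ℝ 2 K)
    (hHess : ∀ z, ‖iteratedFDeriv ℝ 2 K z‖ ≤ CK) :
    ∃ A B : ℝ, 0 ≤ B ∧ ∀ z, |K z| ≤ A + B * ‖z‖ ^ 2 := by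
  have hCK0 : 0 ≤ CK := le_trans (norm_nonneg _) (hHess 0)
  have hd1 : Differentiable ℝ K := hK2.differentiable (by norm_num)
  have hK1 : ContDiff ℝ 1 (fderiv ℝ K) := hK2.fderiv_right (by norm_num)
  have hd2 : Differentiable ℝ (fderiv ℝ K) := hK1.differentiable (by norm_num)
  have hbound2 : ∀ w, ‖fderiv ℝ (fderiv ℝ K) w‖ ≤ CK := by
    intro w
    have e1 : ‖iteratedFDeriv ℝ 0 (fderiv ℝ (fderiv ℝ K)) w‖
        = ‖fderiv ℝ (fderiv ℝ K) w‖ := norm_iteratedFDeriv_zero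
    have e2 : ‖iteratedFDeriv ℝ 0 (fderiv ℝ (fderiv ℝ K)) w‖
        = ‖iteratedFDeriv ℝ 1 (fderiv ℝ K) w‖ := norm_iteratedFDeriv_fderiv
    have e3 : ‖iteratedFDeriv ℝ 1 (fderiv ℝ K) w‖
        = ‖iteratedFDeriv ℝ 2 K w‖ := norm_iteratedFDeriv_fderiv
    rw [← e1, e2, e3]; exact hHess w
  have hlip : ∀ w : E, ‖fderiv ℝ K w - fderiv ℝ K 0‖ ≤ CK * ‖w‖ := by
    intro w
    have := convex_univ.norm_image_sub_le_of_norm_fderiv_le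
      (f := fderiv ℝ K) (fun x _ => hd2 x) (fun x _ => hbound2 x)
      (Set.mem_univ 0) (Set.mem_univ w)
    simpa using this
  refine ⟨|K 0| + ‖fderiv ℝ K 0‖, ‖fderiv ℝ K 0‖ + CK, by positivity, fun z => ?_⟩
  have hKz : ‖K z - K 0‖ ≤ (‖fderiv ℝ K 0‖ + CK * ‖z‖) * ‖z‖ := by
    have hb : ∀ w ∈ Metric.closedBall (0 : E) ‖z‖,
        ‖fderiv ℝ K w‖ ≤ ‖fderiv ℝ K 0‖ + CK * ‖z‖ := by
      intro w hw
      have hw' : ‖w‖ ≤ ‖z‖ := by simpa [Metric.mem_closedBall] using hw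
      have := hlip w
      have t := norm_sub_norm_le (fderiv ℝ K w) (fderiv ℝ K 0)
      nlinarith
    have := (convex_closedBall (0 : E) ‖z‖).norm_image_sub_le_of_norm_fderiv_le
      (fun x _ => hd1 x) hb
      (Metric.mem_closedBall_self (norm_nonneg z))
      (by simp [Metric.mem_closedBall] : z ∈ Metric.closedBall (0:E) ‖z‖)
    simpa using this
  have hz1 : ‖z‖ ≤ 1 + ‖z‖ ^ 2 := by nlinarith [sq_nonneg (‖z‖ - 1)]
  have habs : |K z| ≤ |K 0| + |K z - K 0| := by
    have := abs_sub_abs_le_abs_sub (K z) (K 0)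
    linarith
  simp only [Real.norm_eq_abs] at hKz
  nlinarith [norm_nonneg z, norm_nonneg (fderiv ℝ K 0), hKz, habs, hz1,
    mul_le_mul_of_nonneg_left hz1 (norm_nonneg (fderiv ℝ K 0))]

lemma stmt11_int_fst {α β : Type*} [MeasurableSpace α] [MeasurableSpace β]
    {μ : Measure α} {ν : Measure β} [SFinite μ] [SFinite ν] [IsProbabilityMeasure ν]
    {f : α → ℝ} (hf : Integrable f μ) :
    Integrable (fun p : α × β => f p.1) (μ.prod ν) := by
  have hmap : (μ.prod ν).map Prod.fst = μ := by
    rw [Measure.map_fst_prod]; simp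
  have h1 : AEStronglyMeasurable f ((μ.prod ν).map Prod.fst) := by
    rw [hmap]; exact hf.aestronglyMeasurable
  have := (integrable_map_measure h1 measurable_fst.aemeasurable).mp (by rw [hmap]; exact hf)
  exact this

lemma stmt11_int_snd {α β : Type*} [MeasurableSpace α] [MeasurableSpace β]
    {μ : Measure α} {ν : Measure β} [SFinite μ] [SFinite ν] [IsProbabilityMeasure μ]
    {f : β → ℝ} (hf : Integrable f ν) :
    Integrable (fun p : α × β => f p.2) (μ.prod ν) := by
  have hmap : (μ.prod ν).map Prod.snd = ν := by
    rw [Measure.map_snd_prod]; simp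
  have h1 : AEStronglyMeasurable f ((μ.prod ν).map Prod.snd) := by
    rw [hmap]; exact hf.aestronglyMeasurable
  have := (integrable_map_measure h1 measurable_snd.aemeasurable).mp (by rw [hmap]; exact hf)
  exact this

set_option maxHeartbeats 1000000 in
theorem stmt11 (d : ℕ) (hd : 0 < d)
    (K : EuclideanSpace ℝ (Fin d) → ℝ) (lam CK : ℝ) (hlam : 0 < lam)
    (hK2 : ContDiff ℝ 2 K)
    (hKconv : ConvexOn ℝ Set.univ (fun z => K z - lam / 2 * ‖z‖ ^ 2))
    (hHess : ∀ z, ‖iteratedFDeriv ℝ 2 K z‖ ≤ CK)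
    (μ₁ μ₂ ν₁ ν₂ : Measure (EuclideanSpace ℝ (Fin d)))
    [IsProbabilityMeasure μ₁] [IsProbabilityMeasure μ₂]
    [IsProbabilityMeasure ν₁] [IsProbabilityMeasure ν₂]
    (hμ₁ac : μ₁ ≪ volume) (hμ₂ac : μ₂ ≪ volume)
    (hν₁ac : ν₁ ≪ volume) (hν₂ac : ν₂ ≪ volume)
    (hμ₁m2 : Integrable (fun x => ‖x‖ ^ 2) μ₁) (hμ₂m2 : Integrable (fun x => ‖x‖ ^ 2) μ₂)
    (hν₁m2 : Integrable (fun x => ‖x‖ ^ 2) ν₁) (hν₂m2 : Integrable (fun x => ‖x‖ ^ 2) ν₂)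
    (T₁ T₂ : EuclideanSpace ℝ (Fin d) → EuclideanSpace ℝ (Fin d))
    (hT₁m : Measurable T₁) (hT₂m : Measurable T₂)
    (hpush₁ : μ₁.map T₁ = ν₁) (hpush₂ : μ₂.map T₂ = ν₂)
    -- optimality of the transport maps (Brenier: gradients of convex potentials)
    (hT₁opt : ∃ Φ : EuclideanSpace ℝ (Fin d) → ℝ,
      ConvexOn ℝ Set.univ Φ ∧ ∀ x, HasGradientAt Φ (T₁ x) x)
    (hT₂opt : ∃ Φ : EuclideanSpace ℝ (Fin d) → ℝ,
      ConvexOn ℝ Set.univ Φ ∧ ∀ x, HasGradientAt Φ (T₂ x) x)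
    -- vanishing combined centers of mass
    (hcm0 : (∫ x, x ∂μ₁) + (∫ x, x ∂μ₂) = 0)
    (hcm1 : (∫ x, x ∂ν₁) + (∫ x, x ∂ν₂) = 0)
    (s : ℝ) (hs : s ∈ Set.Icc (0:ℝ) 1) :
    (∫ x, ∫ y, K ((1 - s) • x + s • T₁ x - ((1 - s) • y + s • T₂ y)) ∂μ₂ ∂μ₁) ≤
      (1 - s) * (∫ x, ∫ y, K (x - y) ∂μ₂ ∂μ₁) +
        s * (∫ x, ∫ y, K (x - y) ∂ν₂ ∂ν₁) -
        lam / 2 * s * (1 - s) *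
          ((∫ x, ‖T₁ x - x‖ ^ 2 ∂μ₁) + ∫ x, ‖T₂ x - x‖ ^ 2 ∂μ₂) := by
  obtain ⟨hs0, hs1⟩ := hs
  obtain ⟨A, B, hB, hKb⟩ := stmt11_quad_growth hK2 hHess
  have hc : 0 ≤ lam / 2 * s * (1 - s) := by
    have : 0 ≤ lam / 2 := by linarith
    have h1 : (0:ℝ) ≤ 1 - s := by linarith
    positivity
  have hKm : Measurable K := hK2.continuous.measurable
  -- basic coefficient bounds
  have habs1 : |1 - s| ≤ 1 := abs_le.mpr ⟨by linarith, by linarith⟩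
  have habs2 : |s| ≤ 1 := abs_le.mpr ⟨by linarith, by linarith⟩
  have habs3 : |(1:ℝ)| ≤ 1 := by simp
  have habs4 : |(0:ℝ)| ≤ 1 := by simp
  have habs5 : |(-1:ℝ)| ≤ 1 := by simp
  -- second moments of transported variables
  have hT1sq : Integrable (fun x => ‖T₁ x‖ ^ 2) μ₁ := by
    have h1 : AEStronglyMeasurable (fun z : EuclideanSpace ℝ (Fin d) => ‖z‖ ^ 2) (μ₁.map T₁) := by
      exact (continuous_norm.pow 2).aestronglyMeasurable
    have := (integrable_map_measure h1 hT₁m.aemeasurable).mp (by rw [hpush₁]; exact hν₁m2)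
    exact this
  have hT2sq : Integrable (fun x => ‖T₂ x‖ ^ 2) μ₂ := by
    have h1 : AEStronglyMeasurable (fun z : EuclideanSpace ℝ (Fin d) => ‖z‖ ^ 2) (μ₂.map T₂) := by
      exact (continuous_norm.pow 2).aestronglyMeasurable
    have := (integrable_map_measure h1 hT₂m.aemeasurable).mp (by rw [hpush₂]; exact hν₂m2)
    exact this
  -- dominating function
  have hQ : Integrable (fun p : EuclideanSpace ℝ (Fin d) × EuclideanSpace ℝ (Fin d) =>
      (‖p.1‖ ^ 2 + ‖T₁ p.1‖ ^ 2) + (‖p.2‖ ^ 2 + ‖T₂ p.2‖ ^ 2)) (μ₁.prod μ₂) :=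
    (stmt11_int_fst (hμ₁m2.add hT1sq)).add (stmt11_int_snd (hμ₂m2.add hT2sq))
  have hD : Integrable (fun p : EuclideanSpace ℝ (Fin d) × EuclideanSpace ℝ (Fin d) =>
      A + (4 * B) * ((‖p.1‖ ^ 2 + ‖T₁ p.1‖ ^ 2) + (‖p.2‖ ^ 2 + ‖T₂ p.2‖ ^ 2))) (μ₁.prod μ₂) :=
    (integrable_const A).add (hQ.const_mul (4 * B))
  -- generic bound
  have hgen : ∀ (c₁ c₂ : ℝ), |c₁| ≤ 1 → |c₂| ≤ 1 → ∀ p : EuclideanSpace ℝ (Fin d) × EuclideanSpace ℝ (Fin d),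
      |K (c₁ • (p.1 - p.2) + c₂ • (T₁ p.1 - T₂ p.2))|
        ≤ A + (4 * B) * ((‖p.1‖ ^ 2 + ‖T₁ p.1‖ ^ 2) + (‖p.2‖ ^ 2 + ‖T₂ p.2‖ ^ 2)) := by
    intro c₁ c₂ h₁ h₂ p
    have h3 := hKb (c₁ • (p.1 - p.2) + c₂ • (T₁ p.1 - T₂ p.2))
    have h4 := stmt11_four_sq (x := p.1) (y := p.2) (u := T₁ p.1) (v := T₂ p.2) h₁ h₂
    nlinarith [mul_le_mul_of_nonneg_left h4 hB]
  -- measurability of generic map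
  have hmgen : ∀ (c₁ c₂ : ℝ), AEStronglyMeasurable
      (fun p : EuclideanSpace ℝ (Fin d) × EuclideanSpace ℝ (Fin d) => K (c₁ • (p.1 - p.2) + c₂ • (T₁ p.1 - T₂ p.2))) (μ₁.prod μ₂) := by
    intro c₁ c₂
    exact (hKm.comp (((measurable_fst.sub measurable_snd).const_smul c₁).add
      (((hT₁m.comp measurable_fst).sub (hT₂m.comp measurable_snd)).const_smul c₂)
      )).aestronglyMeasurable
  have hIgen : ∀ (c₁ c₂ : ℝ), |c₁| ≤ 1 → |c₂| ≤ 1 →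
      Integrable (fun p : EuclideanSpace ℝ (Fin d) × EuclideanSpace ℝ (Fin d) => K (c₁ • (p.1 - p.2) + c₂ • (T₁ p.1 - T₂ p.2)))
        (μ₁.prod μ₂) := by
    intro c₁ c₂ h₁ h₂
    exact hD.mono' (hmgen c₁ c₂) (ae_of_all _ fun p => by
      simpa [Real.norm_eq_abs] using hgen c₁ c₂ h₁ h₂ p)
  have hF : Integrable (fun p : EuclideanSpace ℝ (Fin d) × EuclideanSpace ℝ (Fin d) =>
      K ((1 - s) • (p.1 - p.2) + s • (T₁ p.1 - T₂ p.2))) (μ₁.prod μ₂) :=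
    hIgen _ _ habs1 habs2
  have hF0 : Integrable (fun p : EuclideanSpace ℝ (Fin d) × EuclideanSpace ℝ (Fin d) => K (p.1 - p.2)) (μ₁.prod μ₂) := by
    have := hIgen 1 0 habs3 habs4
    simpa using this
  have hF1 : Integrable (fun p : EuclideanSpace ℝ (Fin d) × EuclideanSpace ℝ (Fin d) => K (T₁ p.1 - T₂ p.2)) (μ₁.prod μ₂) := by
    have := hIgen 0 1 habs4 habs3
    simpa using this
  have hGbd : ∀ p : EuclideanSpace ℝ (Fin d) × EuclideanSpace ℝ (Fin d), ‖(p.1 - T₁ p.1) - (p.2 - T₂ p.2)‖ ^ 2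
      ≤ 4 * ((‖p.1‖ ^ 2 + ‖T₁ p.1‖ ^ 2) + (‖p.2‖ ^ 2 + ‖T₂ p.2‖ ^ 2)) := by
    intro p
    have h4 := stmt11_four_sq (x := p.1) (y := p.2) (u := T₁ p.1) (v := T₂ p.2) habs3 habs5
    have he : (1:ℝ) • (p.1 - p.2) + (-1:ℝ) • (T₁ p.1 - T₂ p.2)
        = (p.1 - T₁ p.1) - (p.2 - T₂ p.2) := by module
    rw [he] at h4
    linarith
  have hGmeas : AEStronglyMeasurable
      (fun p : EuclideanSpace ℝ (Fin d) × EuclideanSpace ℝ (Fin d) => ‖(p.1 - T₁ p.1) - (p.2 - T₂ p.2)‖ ^ 2) (μ₁.prod μ₂) := by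
    exact (((measurable_fst.sub (hT₁m.comp measurable_fst)).sub
      (measurable_snd.sub (hT₂m.comp measurable_snd))).norm.pow_const 2).aestronglyMeasurable
  have hG : Integrable (fun p : EuclideanSpace ℝ (Fin d) × EuclideanSpace ℝ (Fin d) => ‖(p.1 - T₁ p.1) - (p.2 - T₂ p.2)‖ ^ 2)
      (μ₁.prod μ₂) := by
    refine (hQ.const_mul 4).mono' hGmeas (ae_of_all _ fun p => ?_)
    have := hGbd p
    have h0 : (0:ℝ) ≤ ‖(p.1 - T₁ p.1) - (p.2 - T₂ p.2)‖ ^ 2 := sq_nonneg _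
    simpa [Real.norm_eq_abs, abs_of_nonneg h0] using this
  -- pointwise convexity inequality
  have hpt : ∀ p : EuclideanSpace ℝ (Fin d) × EuclideanSpace ℝ (Fin d),
      K ((1 - s) • (p.1 - p.2) + s • (T₁ p.1 - T₂ p.2))
        ≤ (1 - s) * K (p.1 - p.2) + s * K (T₁ p.1 - T₂ p.2)
          - lam / 2 * s * (1 - s) * ‖(p.1 - T₁ p.1) - (p.2 - T₂ p.2)‖ ^ 2 := by
    intro p
    have h := stmt11_pointwise_conv hKconv hs0 hs1 (p.1 - p.2) (T₁ p.1 - T₂ p.2)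
    have he : (p.1 - p.2) - (T₁ p.1 - T₂ p.2) = (p.1 - T₁ p.1) - (p.2 - T₂ p.2) := by
      module
    rwa [he] at h
  have hRHSint : Integrable (fun p : EuclideanSpace ℝ (Fin d) × EuclideanSpace ℝ (Fin d) =>
      (1 - s) * K (p.1 - p.2) + s * K (T₁ p.1 - T₂ p.2)
        - lam / 2 * s * (1 - s) * ‖(p.1 - T₁ p.1) - (p.2 - T₂ p.2)‖ ^ 2) (μ₁.prod μ₂) := by
    exact ((hF0.const_mul _).add (hF1.const_mul _)).sub (hG.const_mul _)
  have hmono : ∫ p, K ((1 - s) • (p.1 - p.2) + s • (T₁ p.1 - T₂ p.2)) ∂(μ₁.prod μ₂)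
      ≤ ∫ p, ((1 - s) * K (p.1 - p.2) + s * K (T₁ p.1 - T₂ p.2)
        - lam / 2 * s * (1 - s) * ‖(p.1 - T₁ p.1) - (p.2 - T₂ p.2)‖ ^ 2) ∂(μ₁.prod μ₂) :=
    integral_mono hF hRHSint hpt
  have hsplit : ∫ p, ((1 - s) * K (p.1 - p.2) + s * K (T₁ p.1 - T₂ p.2)
        - lam / 2 * s * (1 - s) * ‖(p.1 - T₁ p.1) - (p.2 - T₂ p.2)‖ ^ 2) ∂(μ₁.prod μ₂)
      = (1 - s) * (∫ p, K (p.1 - p.2) ∂(μ₁.prod μ₂))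
        + s * (∫ p, K (T₁ p.1 - T₂ p.2) ∂(μ₁.prod μ₂))
        - lam / 2 * s * (1 - s)
          * (∫ p, ‖(p.1 - T₁ p.1) - (p.2 - T₂ p.2)‖ ^ 2 ∂(μ₁.prod μ₂)) := by
    have h1 : Integrable (fun p : EuclideanSpace ℝ (Fin d) × EuclideanSpace ℝ (Fin d) =>
        (1 - s) * K (p.1 - p.2) + s * K (T₁ p.1 - T₂ p.2)) (μ₁.prod μ₂) := by
      exact (hF0.const_mul _).add (hF1.const_mul _)
    have h2 : Integrable (fun p : EuclideanSpace ℝ (Fin d) × EuclideanSpace ℝ (Fin d) =>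
        lam / 2 * s * (1 - s) * ‖(p.1 - T₁ p.1) - (p.2 - T₂ p.2)‖ ^ 2) (μ₁.prod μ₂) := by
      exact hG.const_mul _
    have h3 : Integrable (fun p : EuclideanSpace ℝ (Fin d) × EuclideanSpace ℝ (Fin d) =>
        (1 - s) * K (p.1 - p.2)) (μ₁.prod μ₂) := by exact hF0.const_mul _
    have h4 : Integrable (fun p : EuclideanSpace ℝ (Fin d) × EuclideanSpace ℝ (Fin d) =>
        s * K (T₁ p.1 - T₂ p.2)) (μ₁.prod μ₂) := by exact hF1.const_mul _
    rw [integral_sub h1 h2, integral_add h3 h4,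
      integral_const_mul, integral_const_mul, integral_const_mul]
  -- vector-valued integrability
  have hid1 : Integrable (fun x : EuclideanSpace ℝ (Fin d) => x) μ₁ := by
    refine ((integrable_const (1:ℝ)).add hμ₁m2).mono' aestronglyMeasurable_id
      (ae_of_all _ fun x => ?_)
    simp only [Pi.add_apply]
    nlinarith [norm_nonneg x, sq_nonneg (‖x‖ - 1)]
  have hid2 : Integrable (fun x : EuclideanSpace ℝ (Fin d) => x) μ₂ := by
    refine ((integrable_const (1:ℝ)).add hμ₂m2).mono' aestronglyMeasurable_id
      (ae_of_all _ fun x => ?_)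
    simp only [Pi.add_apply]
    nlinarith [norm_nonneg x, sq_nonneg (‖x‖ - 1)]
  have hidν₁ : Integrable (fun x : EuclideanSpace ℝ (Fin d) => x) ν₁ := by
    refine ((integrable_const (1:ℝ)).add hν₁m2).mono' aestronglyMeasurable_id
      (ae_of_all _ fun x => ?_)
    simp only [Pi.add_apply]
    nlinarith [norm_nonneg x, sq_nonneg (‖x‖ - 1)]
  have hidν₂ : Integrable (fun x : EuclideanSpace ℝ (Fin d) => x) ν₂ := by
    refine ((integrable_const (1:ℝ)).add hν₂m2).mono' aestronglyMeasurable_id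
      (ae_of_all _ fun x => ?_)
    simp only [Pi.add_apply]
    nlinarith [norm_nonneg x, sq_nonneg (‖x‖ - 1)]
  have hT1int : Integrable T₁ μ₁ := by
    have h1 : AEStronglyMeasurable (fun z : EuclideanSpace ℝ (Fin d) => z) (μ₁.map T₁) :=
      aestronglyMeasurable_id
    have := (integrable_map_measure h1 hT₁m.aemeasurable).mp (by rw [hpush₁]; exact hidν₁)
    exact this
  have hT2int : Integrable T₂ μ₂ := by
    have h1 : AEStronglyMeasurable (fun z : EuclideanSpace ℝ (Fin d) => z) (μ₂.map T₂) :=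
      aestronglyMeasurable_id
    have := (integrable_map_measure h1 hT₂m.aemeasurable).mp (by rw [hpush₂]; exact hidν₂)
    exact this
  have ha_int : Integrable (fun x => x - T₁ x) μ₁ := hid1.sub hT1int
  have hb_int : Integrable (fun y => y - T₂ y) μ₂ := hid2.sub hT2int
  have hasq : Integrable (fun x => ‖x - T₁ x‖ ^ 2) μ₁ := by
    refine ((hμ₁m2.add hT1sq).const_mul 2).mono'
      (((measurable_id.sub hT₁m).norm.pow_const 2).aestronglyMeasurable)
      (ae_of_all _ fun x => ?_)
    have h := norm_sub_le x (T₁ x)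
    have h0 : (0:ℝ) ≤ ‖x - T₁ x‖ ^ 2 := sq_nonneg _
    simp only [Pi.add_apply, Real.norm_eq_abs, abs_of_nonneg h0]
    nlinarith [norm_nonneg x, norm_nonneg (T₁ x), sq_nonneg (‖x‖ - ‖T₁ x‖), norm_nonneg (x - T₁ x)]
  have hbsq : Integrable (fun y => ‖y - T₂ y‖ ^ 2) μ₂ := by
    refine ((hμ₂m2.add hT2sq).const_mul 2).mono'
      (((measurable_id.sub hT₂m).norm.pow_const 2).aestronglyMeasurable)
      (ae_of_all _ fun y => ?_)
    have h := norm_sub_le y (T₂ y)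
    have h0 : (0:ℝ) ≤ ‖y - T₂ y‖ ^ 2 := sq_nonneg _
    simp only [Pi.add_apply, Real.norm_eq_abs, abs_of_nonneg h0]
    nlinarith [norm_nonneg y, norm_nonneg (T₂ y), sq_nonneg (‖y‖ - ‖T₂ y‖), norm_nonneg (y - T₂ y)]
  have hinner : Integrable (fun p : EuclideanSpace ℝ (Fin d) × EuclideanSpace ℝ (Fin d) =>
      ⟪p.1 - T₁ p.1, p.2 - T₂ p.2⟫) (μ₁.prod μ₂) := by
    refine ((stmt11_int_fst hasq).add (stmt11_int_snd hbsq)).mono'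
      (((measurable_fst.sub (hT₁m.comp measurable_fst)).inner
        (measurable_snd.sub (hT₂m.comp measurable_snd))).aestronglyMeasurable)
      (ae_of_all _ fun p => ?_)
    have h := abs_real_inner_le_norm (p.1 - T₁ p.1) (p.2 - T₂ p.2)
    simp only [Pi.add_apply, Real.norm_eq_abs]
    nlinarith [sq_nonneg (‖p.1 - T₁ p.1‖ - ‖p.2 - T₂ p.2‖), norm_nonneg (p.1 - T₁ p.1),
      norm_nonneg (p.2 - T₂ p.2)]
  -- expand the squared norm in the product integral
  have hGint_eq : ∫ p, ‖(p.1 - T₁ p.1) - (p.2 - T₂ p.2)‖ ^ 2 ∂(μ₁.prod μ₂)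
      = (∫ x, ‖x - T₁ x‖ ^ 2 ∂μ₁) + (∫ y, ‖y - T₂ y‖ ^ 2 ∂μ₂)
        - 2 * ⟪∫ x, (x - T₁ x) ∂μ₁, ∫ y, (y - T₂ y) ∂μ₂⟫ := by
    have hGpt : ∀ p : EuclideanSpace ℝ (Fin d) × EuclideanSpace ℝ (Fin d),
        ‖(p.1 - T₁ p.1) - (p.2 - T₂ p.2)‖ ^ 2
          = ‖p.1 - T₁ p.1‖ ^ 2 + ‖p.2 - T₂ p.2‖ ^ 2
            - 2 * ⟪p.1 - T₁ p.1, p.2 - T₂ p.2⟫ := by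
      intro p
      have := norm_sub_sq_real (p.1 - T₁ p.1) (p.2 - T₂ p.2)
      linarith
    rw [integral_congr_ae (ae_of_all _ hGpt)]
    have h1 : Integrable (fun p : EuclideanSpace ℝ (Fin d) × EuclideanSpace ℝ (Fin d) =>
        ‖p.1 - T₁ p.1‖ ^ 2 + ‖p.2 - T₂ p.2‖ ^ 2) (μ₁.prod μ₂) := by
      exact (stmt11_int_fst hasq).add (stmt11_int_snd hbsq)
    have h2 : Integrable (fun p : EuclideanSpace ℝ (Fin d) × EuclideanSpace ℝ (Fin d) =>
        2 * ⟪p.1 - T₁ p.1, p.2 - T₂ p.2⟫) (μ₁.prod μ₂) := by exact hinner.const_mul 2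
    have h3 : Integrable (fun p : EuclideanSpace ℝ (Fin d) × EuclideanSpace ℝ (Fin d) =>
        ‖p.1 - T₁ p.1‖ ^ 2) (μ₁.prod μ₂) := by exact stmt11_int_fst hasq
    have h4 : Integrable (fun p : EuclideanSpace ℝ (Fin d) × EuclideanSpace ℝ (Fin d) =>
        ‖p.2 - T₂ p.2‖ ^ 2) (μ₁.prod μ₂) := by exact stmt11_int_snd hbsq
    rw [integral_sub h1 h2, integral_add h3 h4, integral_const_mul]
    have e1 : ∫ p, ‖p.1 - T₁ p.1‖ ^ 2 ∂(μ₁.prod μ₂) = ∫ x, ‖x - T₁ x‖ ^ 2 ∂μ₁ := by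
      rw [integral_fun_fst (f := fun x : EuclideanSpace ℝ (Fin d) => ‖x - T₁ x‖ ^ 2)]; simp
    have e2 : ∫ p, ‖p.2 - T₂ p.2‖ ^ 2 ∂(μ₁.prod μ₂) = ∫ y, ‖y - T₂ y‖ ^ 2 ∂μ₂ := by
      rw [integral_fun_snd (f := fun y : EuclideanSpace ℝ (Fin d) => ‖y - T₂ y‖ ^ 2)]; simp
    have e3 : ∫ p, ⟪p.1 - T₁ p.1, p.2 - T₂ p.2⟫ ∂(μ₁.prod μ₂)
        = ⟪∫ x, (x - T₁ x) ∂μ₁, ∫ y, (y - T₂ y) ∂μ₂⟫ := by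
      have hiter := integral_integral
        (f := fun x y => ⟪x - T₁ x, y - T₂ y⟫) (μ := μ₁) (ν := μ₂) (by exact hinner)
      rw [← hiter]
      have e4 : ∀ x, ∫ y, ⟪x - T₁ x, y - T₂ y⟫ ∂μ₂
          = ⟪x - T₁ x, ∫ y, (y - T₂ y) ∂μ₂⟫ := fun x => integral_inner hb_int _
      rw [integral_congr_ae (ae_of_all _ e4)]
      calc ∫ x, ⟪x - T₁ x, ∫ y, (y - T₂ y) ∂μ₂⟫ ∂μ₁
          = ∫ x, ⟪∫ y, (y - T₂ y) ∂μ₂, x - T₁ x⟫ ∂μ₁ :=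
            integral_congr_ae (ae_of_all _ fun x => real_inner_comm _ _)
        _ = ⟪∫ y, (y - T₂ y) ∂μ₂, ∫ x, (x - T₁ x) ∂μ₁⟫ := integral_inner ha_int _
        _ = ⟪∫ x, (x - T₁ x) ∂μ₁, ∫ y, (y - T₂ y) ∂μ₂⟫ := real_inner_comm _ _
    rw [e1, e2, e3]
  -- combined center of mass
  have hmT1 : ∫ x, T₁ x ∂μ₁ = ∫ x, x ∂ν₁ := by
    rw [← hpush₁]
    exact (integral_map hT₁m.aemeasurable aestronglyMeasurable_id).symm
  have hmT2 : ∫ x, T₂ x ∂μ₂ = ∫ x, x ∂ν₂ := by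
    rw [← hpush₂]
    exact (integral_map hT₂m.aemeasurable aestronglyMeasurable_id).symm
  have hu1 : ∫ x, (x - T₁ x) ∂μ₁ = (∫ x, x ∂μ₁) - (∫ x, x ∂ν₁) := by
    rw [integral_sub hid1 hT1int, hmT1]
  have hu2 : ∫ y, (y - T₂ y) ∂μ₂ = (∫ x, x ∂μ₂) - (∫ x, x ∂ν₂) := by
    rw [integral_sub hid2 hT2int, hmT2]
  have husum : (∫ x, (x - T₁ x) ∂μ₁) + (∫ y, (y - T₂ y) ∂μ₂) = 0 := by
    rw [hu1, hu2, sub_add_sub_comm, hcm0, hcm1, sub_zero]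
  have hinner_nonpos : ⟪∫ x, (x - T₁ x) ∂μ₁, ∫ y, (y - T₂ y) ∂μ₂⟫ ≤ 0 := by
    have hneg : ∫ y, (y - T₂ y) ∂μ₂ = -(∫ x, (x - T₁ x) ∂μ₁) :=
      eq_neg_of_add_eq_zero_right husum
    rw [hneg, inner_neg_right]
    simpa using real_inner_self_nonneg (x := ∫ x, (x - T₁ x) ∂μ₁)
  -- lower bound for the Wasserstein term
  have hGlb : (∫ x, ‖T₁ x - x‖ ^ 2 ∂μ₁) + (∫ x, ‖T₂ x - x‖ ^ 2 ∂μ₂)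
      ≤ ∫ p, ‖(p.1 - T₁ p.1) - (p.2 - T₂ p.2)‖ ^ 2 ∂(μ₁.prod μ₂) := by
    have e1 : ∫ x, ‖T₁ x - x‖ ^ 2 ∂μ₁ = ∫ x, ‖x - T₁ x‖ ^ 2 ∂μ₁ := by
      simp_rw [norm_sub_rev]
    have e2 : ∫ x, ‖T₂ x - x‖ ^ 2 ∂μ₂ = ∫ y, ‖y - T₂ y‖ ^ 2 ∂μ₂ := by
      simp_rw [norm_sub_rev]
    rw [e1, e2, hGint_eq]
    linarith
  -- identification of the three energy integrals
  have hargeq : ∀ p : EuclideanSpace ℝ (Fin d) × EuclideanSpace ℝ (Fin d),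
      (1 - s) • p.1 + s • T₁ p.1 - ((1 - s) • p.2 + s • T₂ p.2)
        = (1 - s) • (p.1 - p.2) + s • (T₁ p.1 - T₂ p.2) := by
    intro p; module
  have hLHS : (∫ x, ∫ y, K ((1 - s) • x + s • T₁ x - ((1 - s) • y + s • T₂ y)) ∂μ₂ ∂μ₁)
      = ∫ p, K ((1 - s) • (p.1 - p.2) + s • (T₁ p.1 - T₂ p.2)) ∂(μ₁.prod μ₂) := by
    have hFint : Integrable (Function.uncurry fun x y =>
        K ((1 - s) • x + s • T₁ x - ((1 - s) • y + s • T₂ y))) (μ₁.prod μ₂) := by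
      refine hF.congr (ae_of_all _ fun p => ?_)
      simp only [Function.uncurry]
      rw [hargeq p]
    rw [integral_integral hFint]
    exact integral_congr_ae (ae_of_all _ fun p => by
      simp only [Function.uncurry]; rw [hargeq p])
  have hμside : (∫ x, ∫ y, K (x - y) ∂μ₂ ∂μ₁) = ∫ p, K (p.1 - p.2) ∂(μ₁.prod μ₂) := by
    exact integral_integral (f := fun x y => K (x - y)) (by exact hF0)
  have hKν : Integrable (fun p : EuclideanSpace ℝ (Fin d) × EuclideanSpace ℝ (Fin d) =>
      K (p.1 - p.2)) (ν₁.prod ν₂) := by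
    refine ((integrable_const A).add
      (((stmt11_int_fst hν₁m2).add (stmt11_int_snd hν₂m2)).const_mul (2 * B))).mono'
      ((hKm.comp (measurable_fst.sub measurable_snd)).aestronglyMeasurable)
      (ae_of_all _ fun p => ?_)
    have h := hKb (p.1 - p.2)
    have hn := norm_sub_le p.1 p.2
    have hsq : ‖p.1 - p.2‖ ^ 2 ≤ 2 * (‖p.1‖ ^ 2 + ‖p.2‖ ^ 2) := by
      nlinarith [norm_nonneg (p.1 - p.2), norm_nonneg p.1, norm_nonneg p.2,
        sq_nonneg (‖p.1‖ - ‖p.2‖)]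
    simp only [Pi.add_apply, Real.norm_eq_abs]
    nlinarith [mul_le_mul_of_nonneg_left hsq hB]
  have hνside : (∫ x, ∫ y, K (x - y) ∂ν₂ ∂ν₁)
      = ∫ p, K (T₁ p.1 - T₂ p.2) ∂(μ₁.prod μ₂) := by
    rw [integral_integral (f := fun x y => K (x - y)) (by exact hKν)]
    have hmp : ν₁.prod ν₂ = (μ₁.prod μ₂).map (Prod.map T₁ T₂) := by
      rw [← hpush₁, ← hpush₂]
      exact Measure.map_prod_map _ _ hT₁m hT₂m
    have hsm : AEStronglyMeasurable (fun p : EuclideanSpace ℝ (Fin d) ×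
        EuclideanSpace ℝ (Fin d) => K (p.1 - p.2))
        ((μ₁.prod μ₂).map (Prod.map T₁ T₂)) := by
      exact (hKm.comp (measurable_fst.sub measurable_snd)).aestronglyMeasurable
    rw [hmp, integral_map (hT₁m.prodMap hT₂m).aemeasurable hsm]
    simp [Prod.map]
  -- final assembly
  rw [hLHS, hμside, hνside]
  have hfin := mul_le_mul_of_nonneg_left hGlb hc
  linarith [hmono, hsplit, hfin]
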